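/- arXiv:1909.07895 — 8 statements merged into one kernel-verified Lean document; each statement's English description precedes it below -/
import Mathlib

section
/- If f : [α, β] → ℝ is continuous and has nonnegative left derivative at every point of (α, β], then f is monotonically increasing on [α, β]. -/
/-- If `f` is continuous on `[α, β]` and has a nonnegative left derivative at every
point of `(α, β]`, then `f` is monotonically increasing on `[α, β]`. -/
theorem stmt0 (f : ℝ → ℝ) (α β : ℝ) (hαβ : α ≤ β)
    (hcont : ContinuousOn f (Set.Icc α β))
    (hderiv : ∀ x ∈ Set.Ioc α β, ∃ L, 0 ≤ L ∧
      Filter.Tendsto (fun ε => (f x - f (x - ε)) / ε) (nhdsWithin 0 (Set.Ioi 0)) (nhds L)) :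
    MonotoneOn f (Set.Icc α β) := by
  intro x hx y hy hxy
  -- work with g t = - f (-t) on [-y, -x]
  set g : ℝ → ℝ := fun t => -f (-t) with hg
  -- choose the derivative function
  have key : ∀ t ∈ Set.Ico (-y) (-x), ∃ L, 0 ≤ L ∧ HasDerivWithinAt g L (Set.Ici t) t := by
    intro t ht
    have hmem : -t ∈ Set.Ioc α β := by
      constructor
      · have : t < -x := ht.2
        have : x < -t := by linarith
        exact lt_of_le_of_lt hx.1 this
      · have : -y ≤ t := ht.1
        have : -t ≤ y := by linarith
        exact le_trans this hy.2
    obtain ⟨L, hL0, hL⟩ := hderiv (-t) hmem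
    refine ⟨L, hL0, ?_⟩
    have hmap : Filter.Tendsto (fun z => z - t) (nhdsWithin t (Set.Ioi t))
        (nhdsWithin 0 (Set.Ioi 0)) := by
      apply Filter.Tendsto.inf
      · have h1 : Filter.Tendsto (fun z : ℝ => z - t) (nhds t) (nhds (t - t)) :=
          (continuous_sub_right t).tendsto t
        simpa using h1
      · refine Filter.tendsto_principal.2 ?_
        filter_upwards [Filter.eventually_mem_set.2 (Filter.mem_principal_self _)] with z hz
        exact sub_pos.2 (Set.mem_Ioi.1 hz)
    have htend : Filter.Tendsto (slope g t) (nhdsWithin t (Set.Ioi t)) (nhds L) := by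
      have := hL.comp hmap
      apply this.congr'
      filter_upwards [self_mem_nhdsWithin] with z hz
      simp only [Function.comp_apply, slope_def_field, g]
      have h1 : -t - (z - t) = -z := by ring
      rw [h1]
      rw [div_eq_div_iff (ne_of_gt (sub_pos.2 hz)) (ne_of_gt (sub_pos.2 hz))]
      ring
    have : HasDerivWithinAt g L (Set.Ioi t) t :=
      (hasDerivWithinAt_iff_tendsto_slope' (Set.notMem_Ioi_self)).2 htend
    exact this.Ici_of_Ioi
  choose! L hL0 hLd using key
  have hgc : ContinuousOn g (Set.Icc (-y) (-x)) := by
    apply ContinuousOn.neg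
    apply hcont.comp continuousOn_neg
    intro t ht
    simp only [Set.mem_Icc] at ht ⊢
    constructor
    · have := ht.2; have := hx.1; linarith
    · have := ht.1; have := hy.2; linarith
  have main := image_le_of_liminf_slope_right_le_deriv_boundary
    (f := fun _ => g (-y)) (a := -y) (b := -x) (B := g) (B' := L)
    continuousOn_const le_rfl hgc (fun t ht => (hLd t ht))
    (fun t ht r hr => by
      have hr0 : 0 < r := lt_of_le_of_lt (hL0 t ht) hr
      apply Filter.Eventually.frequently
      filter_upwards [self_mem_nhdsWithin] with z hz
      simp [slope_def_field, hr0])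
  have hend : g (-y) ≤ g (-x) := main ⟨by linarith, le_refl _⟩
  simpa [g] using hend
end

section
/- Let r' be continuous, positive and strictly decreasing on an interval, and let X be a nonnegative random variable with ρ(x) = P(X < x), x̲ = max{x ≥ 0 : ρ(x) = 0} < ∞. Then r'(x̲) > P(X = x̲)·r'(x̲) whenever P(X = x̲) < 1, hence the set {c ≥ 0 : r'(c) ≥ E[r'(X)·1{X<c}]} contains a right neighborhood of x̲ and is an interval of the form [0, c*] for some c* > x̲. -/
open MeasureTheory

open Filter Topology

/-- With `r'` continuous positive strictly decreasing and `x̲` the maximal point where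
`P(X < x) = 0`, if `P(X = x̲) < 1` then `r'(x̲) > P(X = x̲)·r'(x̲)`, and the set
`{c ≥ 0 : r'(c) ≥ E[r'(X)·1{X<c}]}` is an interval `[0, c*]` with `c* > x̲`. -/
theorem stmt3 {Ω : Type*} [MeasurableSpace Ω] (μ : Measure Ω) [IsProbabilityMeasure μ]
    (X : Ω → ℝ) (hX : Measurable X) (hXnn : ∀ ω, 0 ≤ X ω)
    (r' : ℝ → ℝ) (hr'cont : Continuous r') (hr'pos : ∀ x, 0 < r' x)
    (hr'anti : StrictAnti r')
    (xlow : ℝ)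
    (hxlow : IsGreatest {x : ℝ | 0 ≤ x ∧ μ {ω | X ω < x} = 0} xlow)
    (xup : ℝ) (hxup : xlow < xup)
    (hgap : r' xup < r' xlow)
    (hatom : μ {ω | X ω = xlow} < 1) :
    ((μ {ω | X ω = xlow}).toReal * r' xlow < r' xlow) ∧
    ∃ cstar : ℝ, xlow < cstar ∧
      {c : ℝ | 0 ≤ c ∧ (∫ ω in {ω | X ω < c}, r' (X ω) ∂μ) ≤ r' c} = Set.Icc 0 cstar := by
  classical
  have hxlow0 : 0 ≤ xlow := hxlow.1.1
  have hnull : μ {ω | X ω < xlow} = 0 := hxlow.1.2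
  have hmf : Measurable fun ω => r' (X ω) := hr'cont.measurable.comp hX
  have hfpos : ∀ ω, 0 < r' (X ω) := fun ω => hr'pos _
  have hfub : ∀ ω, r' (X ω) ≤ r' 0 := fun ω => hr'anti.antitone (hXnn ω)
  have hfi : Integrable (fun ω => r' (X ω)) μ := by
    refine Integrable.mono' (integrable_const (r' 0)) hmf.aestronglyMeasurable ?_
    filter_upwards with ω
    rw [Real.norm_eq_abs, abs_of_pos (hfpos ω)]; exact hfub ω
  have hms : ∀ c : ℝ, MeasurableSet {ω | X ω < c} := fun c => hX measurableSet_Iio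
  set G : ℝ → ℝ := fun c => ∫ ω in {ω | X ω < c}, r' (X ω) ∂μ with hGdef
  have hGmono : Monotone G := by
    intro a b hab
    refine setIntegral_mono_set hfi.integrableOn ?_ ?_
    · filter_upwards with ω using (hfpos ω).le
    · exact HasSubset.Subset.eventuallyLE fun ω h => lt_of_lt_of_le h hab
  -- Part 1
  have hp1 : (μ {ω | X ω = xlow}).toReal < 1 := by
    rw [← ENNReal.toReal_one]
    exact ENNReal.toReal_strict_mono ENNReal.one_ne_top hatom
  have part1 : (μ {ω | X ω = xlow}).toReal * r' xlow < r' xlow :=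
    mul_lt_of_lt_one_left (hr'pos xlow) hp1
  refine ⟨part1, ?_⟩
  -- a.e. bound r'(X) ≤ r' xlow
  have haeX : ∀ᵐ ω ∂μ, xlow ≤ X ω := by
    rw [ae_iff]
    simpa [not_le] using hnull
  have haef : ∀ᵐ ω ∂μ, r' (X ω) ≤ r' xlow :=
    haeX.mono fun ω h => hr'anti.antitone h
  -- Step B : find c0 > xlow in S
  have honediv : Tendsto (fun n : ℕ => 1 / ((n : ℝ) + 1)) atTop (𝓝 0) :=
    tendsto_one_div_add_atTop_nhds_zero_nat
  set A : ℕ → Set Ω := fun n => {ω | X ω < xlow + 1 / ((n : ℝ) + 1)} with hAdef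
  have hdivmono : ∀ m n : ℕ, m ≤ n → 1 / ((n : ℝ) + 1) ≤ 1 / ((m : ℝ) + 1) := by
    intro m n hmn
    have hc : (m : ℝ) ≤ (n : ℝ) := Nat.cast_le.2 hmn
    apply one_div_le_one_div_of_le
    · positivity
    · linarith
  have hAanti : Antitone A := by
    intro m n hmn ω h
    simp only [hAdef, Set.mem_setOf_eq] at h ⊢
    have := hdivmono m n hmn
    linarith
  have hAint : ⋂ n, A n = {ω | X ω ≤ xlow} := by
    ext ω
    simp only [Set.mem_iInter, hAdef, Set.mem_setOf_eq]
    constructor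
    · intro h
      by_contra hc
      push_neg at hc
      obtain ⟨n, hn⟩ := exists_nat_one_div_lt (sub_pos.2 hc)
      have := h n
      linarith
    · intro h n
      have : 0 < 1 / ((n : ℝ) + 1) := by positivity
      linarith
  have hμle : μ {ω | X ω ≤ xlow} = μ {ω | X ω = xlow} := by
    apply le_antisymm
    · calc μ {ω | X ω ≤ xlow} ≤ μ ({ω | X ω < xlow} ∪ {ω | X ω = xlow}) := by
            apply measure_mono
            intro ω h
            simp only [Set.mem_setOf_eq] at h
            exact (lt_or_eq_of_le h : X ω < xlow ∨ X ω = xlow)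
        _ ≤ μ {ω | X ω < xlow} + μ {ω | X ω = xlow} := measure_union_le _ _
        _ = μ {ω | X ω = xlow} := by rw [hnull, zero_add]
    · exact measure_mono fun ω h => le_of_eq (h : X ω = xlow)
  have hμA : Tendsto (fun n => μ (A n)) atTop (𝓝 (μ {ω | X ω = xlow})) := by
    have := tendsto_measure_iInter_atTop (μ := μ)
      (fun n => (hms _).nullMeasurableSet) hAanti ⟨0, measure_ne_top μ _⟩
    rwa [hAint, hμle] at this
  have hμAr : Tendsto (fun n => (μ (A n)).toReal) atTop (𝓝 (μ {ω | X ω = xlow}).toReal) :=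
    (ENNReal.tendsto_toReal (measure_ne_top μ _)).comp hμA
  have hlim1 : Tendsto (fun n => (μ (A n)).toReal * r' xlow) atTop
      (𝓝 ((μ {ω | X ω = xlow}).toReal * r' xlow)) := hμAr.mul_const _
  have hcseq : Tendsto (fun n : ℕ => xlow + 1 / ((n : ℝ) + 1)) atTop (𝓝 xlow) := by
    simpa using tendsto_const_nhds.add honediv
  have hlim2 : Tendsto (fun n : ℕ => r' (xlow + 1 / ((n : ℝ) + 1))) atTop (𝓝 (r' xlow)) :=
    (hr'cont.tendsto xlow).comp hcseq
  obtain ⟨n0, hn0⟩ := (hlim1.eventually_lt hlim2 part1).exists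
  set c0 : ℝ := xlow + 1 / ((n0 : ℝ) + 1) with hc0def
  have hc0gt : xlow < c0 := by
    rw [hc0def]
    have : 0 < 1 / ((n0 : ℝ) + 1) := by positivity
    linarith
  have hGc0 : G c0 ≤ r' c0 := by
    have h1 : G c0 ≤ ∫ _ω in A n0, r' xlow ∂μ :=
      setIntegral_mono_ae hfi.integrableOn
        (integrableOn_const (measure_ne_top μ _)) haef
    rw [setIntegral_const, smul_eq_mul] at h1
    exact h1.trans hn0.le
  -- the set S
  set S : Set ℝ := {c : ℝ | 0 ≤ c ∧ G c ≤ r' c} with hSdef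
  have hc0S : c0 ∈ S := ⟨hxlow0.trans hc0gt.le, hGc0⟩
  have hdc : ∀ c ∈ S, ∀ d, 0 ≤ d → d ≤ c → d ∈ S := by
    intro c hc d hd0 hdc
    exact ⟨hd0, le_trans (hGmono hdc) (hc.2.trans (hr'anti.antitone hdc))⟩
  -- Step C : upper bound
  have hbb : BddBelow (Set.range r') := ⟨0, by rintro y ⟨x, rfl⟩; exact (hr'pos x).le⟩
  set L : ℝ := ⨅ x, r' x with hLdef
  have hLlim : Tendsto r' atTop (𝓝 L) := tendsto_atTop_ciInf hr'anti.antitone hbb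
  have hLle : ∀ x, L ≤ r' x := fun x => ciInf_le hbb x
  have hflow : ∀ ω, L < r' (X ω) := fun ω =>
    lt_of_le_of_lt (hLle (X ω + 1)) (hr'anti (lt_add_one _))
  have hI : L < ∫ ω, r' (X ω) ∂μ := by
    have hint : Integrable (fun ω => r' (X ω) - L) μ := hfi.sub (integrable_const L)
    have h1 : (0:ℝ) < ∫ ω, (r' (X ω) - L) ∂μ := by
      rw [integral_pos_iff_support_of_nonneg_ae
        (Eventually.of_forall fun ω => sub_nonneg.2 (hflow ω).le) hint]
      have : Function.support (fun ω => r' (X ω) - L) = Set.univ := by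
        ext ω; simp [Function.support, sub_ne_zero.2 (hflow ω).ne']
      rw [this]
      simp
    rw [integral_sub hfi (integrable_const L), integral_const] at h1
    simp at h1
    linarith
  have hGtop : Tendsto (fun n : ℕ => G n) atTop (𝓝 (∫ ω, r' (X ω) ∂μ)) := by
    have hu : ⋃ n : ℕ, {ω | X ω < (n : ℝ)} = Set.univ := by
      ext ω
      simp only [Set.mem_iUnion, Set.mem_setOf_eq, Set.mem_univ, iff_true]
      exact exists_nat_gt (X ω)
    have hmono : Monotone fun n : ℕ => {ω | X ω < (n : ℝ)} := by
      intro m n hmn ω h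
      simp only [Set.mem_setOf_eq] at h ⊢
      exact lt_of_lt_of_le h (by exact_mod_cast hmn)
    have := tendsto_setIntegral_of_monotone (fun n : ℕ => hms _) hmono
      (by rw [hu]; exact hfi.integrableOn)
    rwa [hu, setIntegral_univ] at this
  have hr'top : Tendsto (fun n : ℕ => r' n) atTop (𝓝 L) :=
    hLlim.comp tendsto_natCast_atTop_atTop
  obtain ⟨N, hN⟩ := (hr'top.eventually_lt hGtop hI).exists
  have hSub : S ⊆ Set.Iic (N : ℝ) := by
    intro c hc
    simp only [Set.mem_Iic]
    by_contra hcN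
    push_neg at hcN
    have h1 : G (N : ℝ) ≤ G c := hGmono hcN.le
    have h2 : r' c ≤ r' (N : ℝ) := hr'anti.antitone hcN.le
    linarith [hc.2]
  have hbddS : BddAbove S := ⟨N, hSub⟩
  have hneS : S.Nonempty := ⟨c0, hc0S⟩
  set cstar : ℝ := sSup S with hcstardef
  have hcstar_gt : xlow < cstar := lt_of_lt_of_le hc0gt (le_csSup hbddS hc0S)
  have hcstar_pos : 0 < cstar := lt_of_le_of_lt hxlow0 hcstar_gt
  -- cstar ∈ S
  have hbS : ∀ᶠ n : ℕ in atTop, cstar - 1 / ((n : ℝ) + 1) ∈ S := by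
    filter_upwards [honediv.eventually_lt_const hcstar_pos] with n hn
    obtain ⟨c, hcS, hlt⟩ := exists_lt_of_lt_csSup hneS
      (show cstar - 1 / ((n : ℝ) + 1) < cstar by
        have : 0 < 1 / ((n : ℝ) + 1) := by positivity
        linarith)
    exact hdc c hcS _ (by linarith) hlt.le
  have hbtend : Tendsto (fun n : ℕ => cstar - 1 / ((n : ℝ) + 1)) atTop (𝓝 cstar) := by
    simpa using tendsto_const_nhds.sub honediv
  have hBmono : Monotone fun n : ℕ => {ω | X ω < cstar - 1 / ((n : ℝ) + 1)} := by
    intro m n hmn ω h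
    simp only [Set.mem_setOf_eq] at h ⊢
    have := hdivmono m n hmn
    linarith
  have hBun : (⋃ n : ℕ, {ω | X ω < cstar - 1 / ((n : ℝ) + 1)}) = {ω | X ω < cstar} := by
    ext ω
    simp only [Set.mem_iUnion, Set.mem_setOf_eq]
    constructor
    · rintro ⟨n, hn⟩
      have : 0 < 1 / ((n : ℝ) + 1) := by positivity
      linarith
    · intro h
      obtain ⟨n, hn⟩ := exists_nat_one_div_lt (sub_pos.2 h)
      exact ⟨n, by linarith⟩
  have hGb : Tendsto (fun n : ℕ => G (cstar - 1 / ((n : ℝ) + 1))) atTop (𝓝 (G cstar)) := by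
    have := tendsto_setIntegral_of_monotone (fun n : ℕ => hms _) hBmono
      (by rw [hBun]; exact hfi.integrableOn)
    rwa [hBun] at this
  have hrb : Tendsto (fun n : ℕ => r' (cstar - 1 / ((n : ℝ) + 1))) atTop (𝓝 (r' cstar)) :=
    (hr'cont.tendsto cstar).comp hbtend
  have hcstarS : cstar ∈ S := by
    refine ⟨hcstar_pos.le, le_of_tendsto_of_tendsto hGb hrb ?_⟩
    filter_upwards [hbS] with n hn using hn.2
  refine ⟨cstar, hcstar_gt, ?_⟩
  ext c
  simp only [Set.mem_setOf_eq, Set.mem_Icc]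
  constructor
  · intro hc
    exact ⟨hc.1, le_csSup hbddS hc⟩
  · intro hc
    exact hdc cstar hcstarS c hc.1 hc.2
end

section
/- For r(x) = ½log(1+x) and X uniform on [0, ω], the threshold c* satisfies ((1+c*)/ω)·log(1+c*) = 1, and as μ = ω/2 → 0, c* ∼ 2μ, i.e., lim_{μ↓0} c*/(2μ) = 1. -/
open Filter Set Real

lemma integral_one_div_one_add (b : ℝ) (hb : 0 < b) :
    ∫ x in (0:ℝ)..b, 1 / (1 + x) = Real.log (1 + b) := by
  have h : ∀ x ∈ Set.uIcc (0:ℝ) b, HasDerivAt (fun y => Real.log (1 + y)) (1 / (1 + x)) x := by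
    intro x hx
    rw [Set.uIcc_of_le hb.le] at hx
    have hx0 : (0:ℝ) < 1 + x := by linarith [hx.1]
    have h1 : HasDerivAt (fun y : ℝ => 1 + y) 1 x := by
      simpa using (hasDerivAt_id x).const_add 1
    have := (Real.hasDerivAt_log hx0.ne').comp x h1
    simpa [one_div, Function.comp_def] using this
  have hint : IntervalIntegrable (fun x => 1 / (1 + x)) MeasureTheory.volume 0 b := by
    apply ContinuousOn.intervalIntegrable
    intro x hx
    rw [Set.uIcc_of_le hb.le] at hx
    have hx0 : (0:ℝ) < 1 + x := by linarith [hx.1]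
    exact (continuousAt_const.div (continuousAt_const.add continuousAt_id) hx0.ne').continuousWithinAt
  have := intervalIntegral.integral_eq_sub_of_hasDerivAt h hint
  simpa using this

lemma tendsto_div_log_one_add :
    Tendsto (fun x : ℝ => x / ((1 + x) * Real.log (1 + x)))
      (nhdsWithin 0 (Set.Ioi 0)) (nhds 1) := by
  have hd : HasDerivAt (fun y : ℝ => Real.log (1 + y)) 1 0 := by
    have h1 : HasDerivAt (fun y : ℝ => 1 + y) 1 0 := by
      simpa using (hasDerivAt_id (0:ℝ)).const_add 1
    have := (Real.hasDerivAt_log (by norm_num : (1:ℝ) + 0 ≠ 0)).comp 0 h1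
    simpa [Function.comp_def] using this
  have hslope := hasDerivAt_iff_tendsto_slope.1 hd
  have hslope' : Tendsto (fun x : ℝ => Real.log (1 + x) / x)
      (nhdsWithin 0 (Set.Ioi 0)) (nhds 1) := by
    have hmono : nhdsWithin (0:ℝ) (Set.Ioi 0) ≤ nhdsWithin 0 {0}ᶜ :=
      nhdsWithin_mono 0 (fun x hx => ne_of_gt hx)
    have := hslope.mono_left hmono
    refine this.congr (fun x => ?_)
    simp [slope_def_field, div_eq_div_iff]
  have hinv : Tendsto (fun x : ℝ => x / Real.log (1 + x))
      (nhdsWithin 0 (Set.Ioi 0)) (nhds 1) := by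
    have := hslope'.inv₀ one_ne_zero
    simpa [inv_div] using this
  have hfac : Tendsto (fun x : ℝ => (1 + x)⁻¹) (nhdsWithin 0 (Set.Ioi 0)) (nhds 1) := by
    have : Tendsto (fun x : ℝ => (1 + x)⁻¹) (nhds 0) (nhds 1) := by
      have : ContinuousAt (fun x : ℝ => (1 + x)⁻¹) 0 :=
        (continuousAt_const.add continuousAt_id).inv₀ (by norm_num)
      simpa using this.tendsto
    exact this.mono_left nhdsWithin_le_nhds
  have := hinv.mul hfac
  simp only [mul_one] at this
  refine this.congr (fun x => ?_)
  rw [mul_comm (1 + x), ← div_div, div_eq_mul_inv (x / Real.log (1 + x))]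

/-- For `X` uniform on `[0, ω]` (mean `μ = ω/2`), the threshold satisfies
`((1+c*)/ω)·log(1+c*) = 1` and `c* ∼ 2μ` as `μ ↓ 0`. -/
theorem stmt14 (c : ℝ → ℝ)
    (hc : ∀ μ > (0:ℝ), 0 < c μ ∧
      1 / (1 + c μ) = ∫ x in (0:ℝ)..(c μ), (1/(2*μ)) / (1+x)) :
    (∀ μ > (0:ℝ), (1 + c μ) / (2*μ) * Real.log (1 + c μ) = 1) ∧
    Filter.Tendsto (fun μ => c μ / (2*μ)) (nhdsWithin 0 (Set.Ioi 0)) (nhds 1) := by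
  have key : ∀ μ > (0:ℝ), (1 + c μ) * Real.log (1 + c μ) = 2 * μ := by
    intro μ hμ
    obtain ⟨hcpos, heq⟩ := hc μ hμ
    have hμ2 : (0:ℝ) < 2 * μ := by linarith
    have hint : ∫ x in (0:ℝ)..(c μ), (1/(2*μ)) / (1+x)
        = (1/(2*μ)) * Real.log (1 + c μ) := by
      have : ∀ x : ℝ, (1/(2*μ)) / (1+x) = (1/(2*μ)) * (1 / (1+x)) := by
        intro x; ring
      simp_rw [this]
      rw [intervalIntegral.integral_const_mul, integral_one_div_one_add _ hcpos]
    rw [hint] at heq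
    have h1c : (0:ℝ) < 1 + c μ := by linarith
    field_simp at heq
    linarith
  constructor
  · intro μ hμ
    have := key μ hμ
    have hμ2 : (2:ℝ) * μ ≠ 0 := by positivity
    field_simp
    linarith
  · -- c μ → 0 within Ioi 0
    have hcto : Tendsto c (nhdsWithin 0 (Set.Ioi 0)) (nhdsWithin 0 (Set.Ioi 0)) := by
      rw [tendsto_nhdsWithin_iff]
      constructor
      · rw [tendsto_order]
        constructor
        · intro a ha
          filter_upwards [self_mem_nhdsWithin] with μ hμ
          exact lt_trans ha (hc μ hμ).1
        · intro b hb
          have hgb : (0:ℝ) < (1 + b) * Real.log (1 + b) := by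
            have : (0:ℝ) < Real.log (1 + b) := Real.log_pos (by linarith)
            positivity
          filter_upwards [Ioo_mem_nhdsGT_of_mem (Set.left_mem_Ico.2 (by positivity : (0:ℝ) < (1+b)*Real.log (1+b)/2))] with μ hμ
          obtain ⟨hμ0, hμδ⟩ := hμ
          by_contra hcb
          push_neg at hcb
          have hk := key μ hμ0
          have hlog : Real.log (1 + b) ≤ Real.log (1 + c μ) :=
            Real.log_le_log (by linarith) (by linarith)
          have hlb : (0:ℝ) ≤ Real.log (1 + b) := Real.log_nonneg (by linarith)
          have : (1 + b) * Real.log (1 + b) ≤ (1 + c μ) * Real.log (1 + c μ) := by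
            have hcpos := (hc μ hμ0).1
            nlinarith
          linarith
      · filter_upwards [self_mem_nhdsWithin] with μ hμ
        exact (hc μ hμ).1
    have hcomp := tendsto_div_log_one_add.comp hcto
    refine hcomp.congr' ?_
    filter_upwards [self_mem_nhdsWithin] with μ hμ
    simp only [Function.comp]
    rw [key μ hμ]
end

section
/- For X uniform on [0, ω] with mean μ = ω/2, the unique positive solution c* of (1+c)log(1+c) = ω satisfies lim_{μ→∞} c*·log(μ)/(2μ) = 1. -/
open Filter Real

/-- For `X` uniform on `[0, ω]` with mean `μ = ω/2`, the unique positive solution `c*`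
of `(1+c)log(1+c) = ω` satisfies `c* ∼ 2μ/log μ` as `μ → ∞`. -/
theorem stmt15 (c : ℝ → ℝ)
    (hc : ∀ μ > (0:ℝ), 0 < c μ ∧ (1 + c μ) * Real.log (1 + c μ) = 2*μ) :
    Filter.Tendsto (fun μ => c μ * Real.log μ / (2*μ)) Filter.atTop (nhds 1) := by
  -- c tends to atTop
  have hct : Tendsto c atTop atTop := by
    apply tendsto_atTop_mono' atTop (f₁ := fun μ => Real.sqrt (2*μ) - 1)
    · filter_upwards [eventually_gt_atTop (0:ℝ)] with μ hμ
      obtain ⟨hc0, heq⟩ := hc μ hμ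
      have h1 : (0:ℝ) < 1 + c μ := by linarith
      have h2 : 2*μ ≤ (1 + c μ)^2 := by
        rw [← heq]; nlinarith [Real.log_le_sub_one_of_pos h1]
      have := Real.sqrt_le_sqrt h2
      rw [Real.sqrt_sq h1.le] at this
      linarith
    · have h2μ : Tendsto (fun μ:ℝ => 2*μ) atTop atTop :=
        tendsto_id.const_mul_atTop (by norm_num : (0:ℝ) < 2)
      have hsqrt : Tendsto Real.sqrt atTop atTop := by
        apply tendsto_atTop_atTop.2
        intro b
        refine ⟨(max b 0)^2, fun a ha => ?_⟩
        have h1 := Real.sqrt_le_sqrt ha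
        rw [Real.sqrt_sq (le_max_right b 0)] at h1
        exact (le_max_left b 0).trans h1
      have : Tendsto (fun μ:ℝ => Real.sqrt (2*μ)) atTop atTop := hsqrt.comp h2μ
      exact tendsto_atTop_add_const_right atTop (-1) this |>.congr (fun x => by ring)
  -- the model function
  have h1x : Tendsto (fun x:ℝ => 1+x) atTop atTop := tendsto_atTop_add_const_left _ 1 tendsto_id
  have hL : Tendsto (fun x:ℝ => Real.log (1+x)) atTop atTop := Real.tendsto_log_atTop.comp h1x
  have hf : Tendsto (fun x : ℝ => (x/(1+x)) *
      ((Real.log (1+x) + Real.log (Real.log (1+x)) - Real.log 2) / Real.log (1+x)))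
      atTop (nhds 1) := by
    have hA : Tendsto (fun x:ℝ => x/(1+x)) atTop (nhds 1) := by
      have h0 : Tendsto (fun x:ℝ => 1 - (1+x)⁻¹) atTop (nhds (1 - 0)) :=
        tendsto_const_nhds.sub (tendsto_inv_atTop_zero.comp h1x)
      rw [sub_zero] at h0
      refine h0.congr' ?_
      filter_upwards [eventually_gt_atTop (0:ℝ)] with x hx
      have : (1:ℝ) + x ≠ 0 := by linarith
      field_simp
      ring
    have hB : Tendsto (fun x:ℝ =>
        (Real.log (1+x) + Real.log (Real.log (1+x)) - Real.log 2) / Real.log (1+x))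
        atTop (nhds 1) := by
      have hlogdiv : Tendsto (fun y:ℝ => Real.log y / y) atTop (nhds 0) :=
        Real.isLittleO_log_id_atTop.tendsto_div_nhds_zero
      have h1 : Tendsto (fun x:ℝ => Real.log (Real.log (1+x)) / Real.log (1+x))
          atTop (nhds 0) := hlogdiv.comp hL
      have h2 : Tendsto (fun x:ℝ => Real.log 2 * (Real.log (1+x))⁻¹) atTop (nhds (Real.log 2 * 0)) :=
        (tendsto_inv_atTop_zero.comp hL).const_mul _
      rw [mul_zero] at h2
      have h3 : Tendsto (fun x:ℝ =>
          1 + Real.log (Real.log (1+x)) / Real.log (1+x) - Real.log 2 * (Real.log (1+x))⁻¹)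
          atTop (nhds (1 + 0 - 0)) := (tendsto_const_nhds.add h1).sub h2
      norm_num at h3
      refine h3.congr' ?_
      filter_upwards [hL.eventually (eventually_gt_atTop (0:ℝ))] with x hx
      have hne : Real.log (1+x) ≠ 0 := ne_of_gt hx
      field_simp
    have := hA.mul hB
    rwa [one_mul] at this
  -- conclude by eventual equality
  have key := hf.comp hct
  refine key.congr' ?_
  filter_upwards [eventually_gt_atTop (0:ℝ)] with μ hμ
  obtain ⟨hc0, heq⟩ := hc μ hμ
  have h1 : (1:ℝ) < 1 + c μ := by linarith
  have hLpos : 0 < Real.log (1 + c μ) := Real.log_pos h1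
  have hlogμ : Real.log μ =
      Real.log (1 + c μ) + Real.log (Real.log (1 + c μ)) - Real.log 2 := by
    have h2μ : Real.log (2*μ) = Real.log 2 + Real.log μ :=
      Real.log_mul (by norm_num) (ne_of_gt hμ)
    have : Real.log (2*μ) = Real.log (1 + c μ) + Real.log (Real.log (1 + c μ)) := by
      rw [← heq, Real.log_mul (by linarith) (ne_of_gt hLpos)]
    linarith
  show (fun x : ℝ => (x/(1+x)) *
      ((Real.log (1+x) + Real.log (Real.log (1+x)) - Real.log 2) / Real.log (1+x))) (c μ)
      = c μ * Real.log μ / (2*μ)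
  simp only
  rw [hlogμ, ← heq]
  have hne1 : (1:ℝ) + c μ ≠ 0 := by linarith
  field_simp
end

section
/- For X exponential with rate η and mean μ = 1/η, the threshold c* defined by (1+c*)∫₀^{c*} η e^{-ηx}/(1+x) dx = 1 satisfies lim_{μ↓0} c*/(−μ log μ) = 1. -/
set_option maxHeartbeats 1000000

open Real Filter MeasureTheory Set

private lemma aux_expDeriv (μ : ℝ) (x : ℝ) :
    HasDerivAt (fun y : ℝ => -Real.exp (-y/μ)) (1/μ * Real.exp (-x/μ)) x := by
  have h1 : HasDerivAt (fun y : ℝ => -y/μ) (-1/μ) x := by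
    simpa using ((hasDerivAt_id x).neg.div_const μ)
  have h2 := h1.exp.neg
  exact h2.congr_deriv (by ring)

private lemma aux_linDeriv (μ : ℝ) (hμ : 0 < μ) (x : ℝ) :
    HasDerivAt (fun y : ℝ => (y + μ - 1) * Real.exp (-y/μ))
      (1/μ * Real.exp (-x/μ) * (1 - x)) x := by
  have h1 : HasDerivAt (fun y : ℝ => -y/μ) (-1/μ) x := by
    simpa using ((hasDerivAt_id x).neg.div_const μ)
  have h3 : HasDerivAt (fun y : ℝ => y + μ - 1) 1 x := by
    simpa using (((hasDerivAt_id x).add_const μ).sub_const 1)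
  have h4 := h3.mul h1.exp
  exact h4.congr_deriv (by field_simp; ring)

private lemma aux_int_bounds (μ cc : ℝ) (hμ : 0 < μ) (hcpos : 0 < cc) :
    1 - μ - Real.exp (-cc/μ) ≤ (∫ x in (0:ℝ)..cc, (1/μ) * Real.exp (-x/μ) / (1+x)) ∧
    (∫ x in (0:ℝ)..cc, (1/μ) * Real.exp (-x/μ) / (1+x)) ≤ 1 - Real.exp (-cc/μ) := by
  have hI : IntervalIntegrable (fun x => (1/μ) * Real.exp (-x/μ) / (1+x)) volume 0 cc := by
    apply ContinuousOn.intervalIntegrable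
    apply ContinuousOn.div
    · exact (continuous_const.mul (Real.continuous_exp.comp
        (continuous_neg.div_const μ))).continuousOn
    · exact (continuous_const.add continuous_id).continuousOn
    · intro x hx
      rw [Set.uIcc_of_le hcpos.le] at hx
      have := hx.1
      positivity
  have hcont2 : Continuous (fun x : ℝ => (1/μ) * Real.exp (-x/μ)) :=
    continuous_const.mul (Real.continuous_exp.comp (continuous_neg.div_const μ))
  have hI2 : IntervalIntegrable (fun x => (1/μ) * Real.exp (-x/μ)) volume 0 cc :=
    hcont2.intervalIntegrable 0 cc
  have hI3 : IntervalIntegrable (fun x => (1/μ) * Real.exp (-x/μ) * (1 - x)) volume 0 cc :=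
    (hcont2.mul (continuous_const.sub continuous_id)).intervalIntegrable 0 cc
  have hval2 : (∫ x in (0:ℝ)..cc, (1/μ) * Real.exp (-x/μ)) = 1 - Real.exp (-cc/μ) := by
    rw [intervalIntegral.integral_eq_sub_of_hasDerivAt
      (fun x _ => aux_expDeriv μ x) hI2]
    norm_num
    try ring
  have hval3 : (∫ x in (0:ℝ)..cc, (1/μ) * Real.exp (-x/μ) * (1 - x))
      = (cc + μ - 1) * Real.exp (-cc/μ) - (μ - 1) := by
    rw [intervalIntegral.integral_eq_sub_of_hasDerivAt
      (fun x _ => aux_linDeriv μ hμ x) hI3]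
    norm_num
    try ring
  constructor
  · have hle : (∫ x in (0:ℝ)..cc, (1/μ) * Real.exp (-x/μ) * (1 - x))
        ≤ (∫ x in (0:ℝ)..cc, (1/μ) * Real.exp (-x/μ) / (1+x)) := by
      apply intervalIntegral.integral_mono_on hcpos.le hI3 hI
      intro x hx
      have hx0 : 0 ≤ x := hx.1
      have h1 : (0:ℝ) < 1 + x := by linarith
      have hae : 0 < (1/μ) * Real.exp (-x/μ) := by positivity
      rw [le_div_iff₀ h1]
      nlinarith [mul_nonneg hae.le (sq_nonneg x)]
    rw [hval3] at hle
    nlinarith [Real.exp_pos (-cc/μ)]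
  · have hle : (∫ x in (0:ℝ)..cc, (1/μ) * Real.exp (-x/μ) / (1+x))
        ≤ (∫ x in (0:ℝ)..cc, (1/μ) * Real.exp (-x/μ)) := by
      apply intervalIntegral.integral_mono_on hcpos.le hI hI2
      intro x hx
      exact div_le_self (by positivity) (by linarith [hx.1])
    rw [hval2] at hle
    exact hle

/-- For `X` exponential with mean `μ`, the threshold `c*` defined by
`(1+c*)∫₀^{c*} η e^{-ηx}/(1+x) dx = 1` satisfies `c* ∼ −μ log μ` as `μ ↓ 0`. -/
theorem stmt16 (c : ℝ → ℝ)
    (hc : ∀ μ > (0:ℝ), 0 < c μ ∧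
      (1 + c μ) * (∫ x in (0:ℝ)..(c μ), (1/μ) * Real.exp (-x/μ) / (1+x)) = 1) :
    Filter.Tendsto (fun μ => c μ / (-(μ * Real.log μ))) (nhdsWithin 0 (Set.Ioi 0))
      (nhds 1) := by
  have hL : Tendsto (fun μ : ℝ => -Real.log μ) (nhdsWithin 0 (Set.Ioi 0)) atTop :=
    tendsto_neg_atBot_atTop.comp Real.tendsto_log_nhdsGT_zero
  have hgl : Tendsto (fun L : ℝ => 1 + Real.log 8 / L) atTop (nhds 1) := by
    have h0 : Tendsto (fun L : ℝ => Real.log 8 / L) atTop (nhds 0) :=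
      tendsto_const_nhds.div_atTop tendsto_id
    simpa using tendsto_const_nhds.add h0
  have hlog8pos : (0:ℝ) < Real.log 8 := Real.log_pos (by norm_num)
  have hhl : Tendsto (fun L : ℝ => 1 - Real.log (L + Real.log 8) / L) atTop (nhds 1) := by
    have h1 : Tendsto (fun L : ℝ => Real.log (L + Real.log 8) / (L + Real.log 8))
        atTop (nhds 0) :=
      Real.isLittleO_log_id_atTop.tendsto_div_nhds_zero.comp
        (tendsto_atTop_add_const_right atTop (Real.log 8) tendsto_id)
    have h2 : Tendsto (fun L : ℝ => (L + Real.log 8) / L) atTop (nhds 1) := by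
      apply hgl.congr'
      filter_upwards [eventually_gt_atTop (0:ℝ)] with L hL0
      field_simp
    have h3 := h1.mul h2
    rw [mul_one] at h3
    have h4 : Tendsto (fun L : ℝ => Real.log (L + Real.log 8) / L) atTop (nhds 0) := by
      apply h3.congr'
      filter_upwards [eventually_gt_atTop (0:ℝ)] with L hL0
      have hL8 : L + Real.log 8 ≠ 0 := by linarith
      field_simp
    simpa using tendsto_const_nhds.sub h4
  have hg : Tendsto (fun μ : ℝ => 1 + Real.log 8 / (-Real.log μ))
      (nhdsWithin 0 (Set.Ioi 0)) (nhds 1) := hgl.comp hL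
  have hh : Tendsto (fun μ : ℝ => 1 - Real.log ((-Real.log μ) + Real.log 8) / (-Real.log μ))
      (nhdsWithin 0 (Set.Ioi 0)) (nhds 1) := hhl.comp hL
  have hmem : Set.Ioo (0:ℝ) (1/100) ∈ nhdsWithin (0:ℝ) (Set.Ioi 0) :=
    Ioo_mem_nhdsGT_of_mem (by constructor <;> norm_num)
  have hbound : ∀ᶠ μ in nhdsWithin (0:ℝ) (Set.Ioi 0),
      (1 - Real.log ((-Real.log μ) + Real.log 8) / (-Real.log μ)
        ≤ c μ / (-(μ * Real.log μ))) ∧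
      (c μ / (-(μ * Real.log μ)) ≤ 1 + Real.log 8 / (-Real.log μ)) := by
    filter_upwards [hmem] with μ hμo
    have hμ : 0 < μ := hμo.1
    have hμ1 : μ < 1/100 := hμo.2
    obtain ⟨hcpos, heq⟩ := hc μ hμ
    set cc := c μ with hccdef
    set L : ℝ := -Real.log μ with hLdef
    have hLμ : Real.log μ = -L := by rw [hLdef]; ring
    have hLpos : 0 < L := by
      have : Real.log μ < 0 := Real.log_neg hμ (by linarith)
      rw [hLdef]; linarith
    have hbnds := aux_int_bounds μ cc hμ hcpos
    set e : ℝ := Real.exp (-cc/μ) with hedef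
    have hepos : 0 < e := Real.exp_pos _
    have keyA : e * (1 + cc) ≤ cc := by nlinarith [hbnds.2, heq, hcpos]
    have keyB : (1 + cc) * (1 - μ - e) ≤ 1 := by nlinarith [hbnds.1, heq, hcpos]
    have hexp2 : Real.exp 2 < 8 := by
      have h := Real.exp_one_lt_d9
      have h2 : Real.exp 2 = Real.exp 1 * Real.exp 1 := by
        rw [← Real.exp_add]; norm_num
      nlinarith [Real.exp_pos 1]
    -- c < 1
    have hc1 : cc < 1 := by
      by_contra hge
      push_neg at hge
      have h1 : e ≤ Real.exp (-(1:ℝ)/μ) := by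
        rw [hedef]
        apply Real.exp_le_exp.2
        rw [div_le_div_iff_of_pos_right hμ]
        linarith
      have h2 : Real.exp (-(1:ℝ)/μ) ≤ μ := by
        have hlb := Real.log_le_sub_one_of_pos (show (0:ℝ) < 1/μ by positivity)
        have hlog : Real.log (1/μ) = -Real.log μ := by
          rw [Real.log_div one_ne_zero (ne_of_gt hμ), Real.log_one]; ring
        rw [hlog] at hlb
        have hμinv : (0:ℝ) < 1/μ := by positivity
        have hstep : -(1:ℝ)/μ ≤ Real.log μ := by
          rw [neg_div]; linarith
        calc Real.exp (-(1:ℝ)/μ) ≤ Real.exp (Real.log μ) := Real.exp_le_exp.2 hstep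
          _ = μ := Real.exp_log hμ
      nlinarith
    -- c > 2μ
    have hc2mu : 2 * μ < cc := by
      by_contra hle
      push_neg at hle
      have h1 : Real.exp (-(2:ℝ)) ≤ e := by
        rw [hedef]
        apply Real.exp_le_exp.2
        rw [neg_div, neg_le_neg_iff, div_le_iff₀ hμ]
        linarith
      have h2 : (8:ℝ)⁻¹ < Real.exp (-(2:ℝ)) := by
        rw [Real.exp_neg]
        exact inv_strictAnti₀ (Real.exp_pos 2) hexp2
      nlinarith [mul_pos hepos hcpos]
    -- e ≥ cc / 8
    have heup : cc/8 ≤ e := by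
      nlinarith [keyB, hepos, hcpos, hc1, hc2mu, hμ1, mul_pos hepos hcpos]
    -- upper bound on cc
    have hupper : cc ≤ μ * (L + Real.log 8) := by
      have hlog1 : Real.log (cc/8) ≤ -cc/μ := by
        calc Real.log (cc/8) ≤ Real.log e := Real.log_le_log (by positivity) heup
        _ = -cc/μ := by rw [hedef, Real.log_exp]
      rw [Real.log_div (ne_of_gt hcpos) (by norm_num)] at hlog1
      have h2 : (Real.log cc - Real.log 8) * μ ≤ -cc := by
        rw [← le_div_iff₀ hμ]
        exact hlog1
      have h3 : Real.log μ ≤ Real.log cc := Real.log_le_log hμ (by linarith)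
      rw [hLμ] at h3
      nlinarith
    -- lower bound on cc
    have hlower : μ * (L - Real.log (L + Real.log 8)) ≤ cc := by
      have he_le : e ≤ cc := by nlinarith [keyA, hepos, hcpos]
      have hlog1 : -cc/μ ≤ Real.log cc := by
        have := Real.log_le_log hepos he_le
        rwa [hedef, Real.log_exp] at this
      have h2 : -cc ≤ Real.log cc * μ := by
        rw [← div_le_iff₀ hμ]
        exact hlog1
      have h3 : Real.log cc ≤ Real.log (μ * (L + Real.log 8)) :=
        Real.log_le_log hcpos hupper
      have h4 : Real.log (μ * (L + Real.log 8)) = Real.log μ + Real.log (L + Real.log 8) :=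
        Real.log_mul (ne_of_gt hμ) (by nlinarith : L + Real.log 8 ≠ 0)
      rw [h4, hLμ] at h3
      nlinarith
    have hμL : 0 < μ * L := mul_pos hμ hLpos
    have hrw : -(μ * Real.log μ) = μ * L := by rw [hLμ]; ring
    constructor
    · rw [hrw, le_div_iff₀ hμL]
      have hexp : (1 - Real.log (L + Real.log 8) / L) * (μ * L)
          = μ * (L - Real.log (L + Real.log 8)) := by
        field_simp
      rw [hexp]
      exact hlower
    · rw [hrw, div_le_iff₀ hμL]
      have hexp : (1 + Real.log 8 / L) * (μ * L) = μ * (L + Real.log 8) := by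
        field_simp
      rw [hexp]
      exact hupper
  exact tendsto_of_tendsto_of_tendsto_of_le_of_le' hh hg
    (hbound.mono fun μ h => h.1) (hbound.mono fun μ h => h.2)
end

section
/- For X Rayleigh with density f_X(x) = (x/θ)e^{-x²/(2θ)} on x ≥ 0 and mean μ = √(πθ/2), the threshold c* defined by (1+c*)∫₀^{c*} f_X(x)/(1+x) dx = 1 satisfies c* ∼ a*·μ as μ → ∞, where a* is the unique positive solution of (πa/2)∫₀^a e^{-πy²/4} dy = 1. -/
open Real Filter MeasureTheory intervalIntegral Set
open scoped Topology

noncomputable def gfun (μ x : ℝ) : ℝ :=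
  (x / (2*μ^2/Real.pi)) * Real.exp (-x^2 / (2*(2*μ^2/Real.pi))) / (1+x)

lemma gcont (μ : ℝ) : ContinuousOn (gfun μ) (Set.Ici 0) := by
  apply ContinuousOn.div
  · exact ((continuous_id.div_const _).mul
      (Real.continuous_exp.comp (((continuous_pow 2).neg).div_const _))).continuousOn
  · exact (continuous_const.add continuous_id).continuousOn
  · intro x hx
    simp only [Set.mem_Ici] at hx
    positivity

lemma gnonneg (μ : ℝ) {x : ℝ} (hx : 0 ≤ x) : 0 ≤ gfun μ x := by
  unfold gfun
  have h1 : 0 ≤ x / (2*μ^2/Real.pi) := by positivity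
  have h2 : (0:ℝ) ≤ 1 + x := by linarith
  positivity

lemma gint (μ : ℝ) {u v : ℝ} (hu : 0 ≤ u) (hv : 0 ≤ v) :
    IntervalIntegrable (gfun μ) volume u v := by
  apply ContinuousOn.intervalIntegrable
  apply (gcont μ).mono
  intro x hx
  rcases Set.mem_uIcc.1 hx with h | h
  · exact hu.trans h.1
  · exact hv.trans h.1

lemma mono1 (μ : ℝ) {c1 c2 : ℝ} (h0 : 0 ≤ c1) (h12 : c1 ≤ c2) :
    (1+c1) * ∫ x in (0:ℝ)..c1, gfun μ x ≤ (1+c2) * ∫ x in (0:ℝ)..c2, gfun μ x := by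
  have hi1 : IntervalIntegrable (gfun μ) volume 0 c1 := gint μ le_rfl h0
  have hi2 : IntervalIntegrable (gfun μ) volume c1 c2 := gint μ h0 (h0.trans h12)
  have hsplit : (∫ x in (0:ℝ)..c2, gfun μ x)
      = (∫ x in (0:ℝ)..c1, gfun μ x) + ∫ x in c1..c2, gfun μ x :=
    (integral_add_adjacent_intervals hi1 hi2).symm
  have hnn1 : 0 ≤ ∫ x in (0:ℝ)..c1, gfun μ x :=
    intervalIntegral.integral_nonneg h0 (fun u hu => gnonneg μ hu.1)
  have hnn2 : 0 ≤ ∫ x in c1..c2, gfun μ x :=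
    intervalIntegral.integral_nonneg h12 (fun u hu => gnonneg μ (h0.trans hu.1))
  rw [hsplit]
  nlinarith

noncomputable def Ffun (b μ y : ℝ) : ℝ :=
  Real.pi*y/2 * ((1+b*μ)/(1+μ*y)) * Real.exp (-Real.pi*y^2/4)

lemma id1 (b : ℝ) {μ : ℝ} (hμ : 0 < μ) (y : ℝ) :
    (1+b*μ) * (μ * gfun μ (μ*y)) = Ffun b μ y := by
  have hμ' : μ ≠ 0 := hμ.ne'
  have hπ : Real.pi ≠ 0 := Real.pi_ne_zero
  have harg : -(μ*y)^2 / (2*(2*μ^2/Real.pi)) = -Real.pi*y^2/4 := by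
    field_simp; ring
  unfold gfun Ffun
  rw [harg]
  by_cases h : (1:ℝ) + μ*y = 0
  · simp [h]
  · field_simp

lemma subst1 (b : ℝ) {μ : ℝ} (hμ : 0 < μ) :
    (1+b*μ) * ∫ x in (0:ℝ)..(b*μ), gfun μ x = ∫ y in (0:ℝ)..b, Ffun b μ y := by
  have h1 : (∫ y in (0:ℝ)..b, gfun μ (μ*y)) = μ⁻¹ • ∫ x in (μ*0)..(μ*b), gfun μ x :=
    integral_comp_mul_left (gfun μ) hμ.ne'
  have h2 : (∫ x in (0:ℝ)..(b*μ), gfun μ x) = μ * ∫ y in (0:ℝ)..b, gfun μ (μ*y) := by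
    rw [h1, smul_eq_mul, mul_comm b μ, mul_zero]
    field_simp
  rw [h2, ← mul_assoc, ← intervalIntegral.integral_const_mul]
  refine intervalIntegral.integral_congr fun y _ => ?_
  rw [mul_assoc]
  exact id1 b hμ y

lemma key (b : ℝ) (hb : 0 < b) :
    Tendsto (fun μ => (1+b*μ) * ∫ x in (0:ℝ)..(b*μ), gfun μ x) atTop
      (nhds (Real.pi*b/2 * ∫ y in (0:ℝ)..b, Real.exp (-Real.pi*y^2/4))) := by
  have huIoc : Set.uIoc (0:ℝ) b = Set.Ioc 0 b := Set.uIoc_of_le hb.le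
  have hDCT : Tendsto (fun μ => ∫ y in (0:ℝ)..b, Ffun b μ y) atTop
      (nhds (∫ y in (0:ℝ)..b, Real.pi*b/2 * Real.exp (-Real.pi*y^2/4))) := by
    apply intervalIntegral.tendsto_integral_filter_of_dominated_convergence
      (bound := fun _ => Real.pi*b)
    · -- measurability
      filter_upwards [eventually_ge_atTop (1:ℝ)] with μ hμ
      apply ContinuousOn.aestronglyMeasurable _ measurableSet_uIoc
      rw [huIoc]
      have hden : ∀ y ∈ Set.Ioc (0:ℝ) b, 1 + μ*y ≠ 0 := by
        intro y hy
        have h0 : (0:ℝ) < y := hy.1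
        nlinarith
      unfold Ffun
      apply ContinuousOn.mul
      · apply ContinuousOn.mul
        · fun_prop
        · exact ContinuousOn.div continuousOn_const (by fun_prop) hden
      · fun_prop
    · -- bound
      filter_upwards [eventually_ge_atTop (1:ℝ)] with μ hμ
      refine Filter.Eventually.of_forall fun y hy => ?_
      rw [huIoc] at hy
      obtain ⟨hy0, hyb⟩ := hy
      have hπ := Real.pi_pos
      have hd : (0:ℝ) < 1 + μ*y := by nlinarith
      have hE0 : (0:ℝ) < Real.exp (-Real.pi*y^2/4) := Real.exp_pos _
      have hE1 : Real.exp (-Real.pi*y^2/4) ≤ 1 := by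
        rw [Real.exp_le_one_iff]
        nlinarith [sq_nonneg y]
      have h1 : (0:ℝ) ≤ 1 + b*μ := by nlinarith
      have hq : y*(1+b*μ)/(1+μ*y) ≤ 2*b := by
        rw [div_le_iff₀ hd]; nlinarith
      have hq0 : (0:ℝ) ≤ y*(1+b*μ)/(1+μ*y) := div_nonneg (by nlinarith) hd.le
      have hFval : Ffun b μ y = Real.pi/2 * (y*(1+b*μ)/(1+μ*y))
          * Real.exp (-Real.pi*y^2/4) := by
        unfold Ffun; ring
      rw [Real.norm_eq_abs, hFval, abs_of_nonneg (by positivity)]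
      nlinarith [mul_le_mul_of_nonneg_left hq (by positivity : (0:ℝ) ≤ Real.pi/2),
        mul_le_mul_of_nonneg_left hE1 (mul_nonneg (by positivity : (0:ℝ) ≤ Real.pi/2) hq0)]
    · exact intervalIntegrable_const
    · -- pointwise limit
      refine Filter.Eventually.of_forall fun y hy => ?_
      rw [huIoc] at hy
      obtain ⟨hy0, hyb⟩ := hy
      have h1 : Tendsto (fun μ : ℝ => (1+b*μ)/(1+μ*y)) atTop (nhds (b/y)) := by
        have heq : ∀ᶠ μ : ℝ in atTop, (μ⁻¹+b)/(μ⁻¹+y) = (1+b*μ)/(1+μ*y) := by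
          filter_upwards [eventually_gt_atTop (0:ℝ)] with μ hμ0
          have hd : (0:ℝ) < 1 + μ*y := by nlinarith
          have hd2 : (0:ℝ) < μ⁻¹ + y := by positivity
          rw [div_eq_div_iff hd2.ne' hd.ne']
          have hμ' : μ⁻¹ * μ = 1 := inv_mul_cancel₀ hμ0.ne'
          nlinarith [hμ']
        have hlim : Tendsto (fun μ : ℝ => (μ⁻¹+b)/(μ⁻¹+y)) atTop (nhds ((0+b)/(0+y))) := by
          apply Tendsto.div (tendsto_inv_atTop_zero.add tendsto_const_nhds)
            (tendsto_inv_atTop_zero.add tendsto_const_nhds)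
          simp [hy0.ne']
        rw [zero_add, zero_add] at hlim
        exact hlim.congr' heq
      have h2 := (h1.const_mul (Real.pi*y/2)).mul_const (Real.exp (-Real.pi*y^2/4))
      have h3 : Real.pi*y/2 * (b/y) * Real.exp (-Real.pi*y^2/4)
          = Real.pi*b/2 * Real.exp (-Real.pi*y^2/4) := by
        field_simp
      rw [h3] at h2
      exact h2
  have heq : ∀ᶠ μ : ℝ in atTop,
      (∫ y in (0:ℝ)..b, Ffun b μ y) = (1+b*μ) * ∫ x in (0:ℝ)..(b*μ), gfun μ x := by
    filter_upwards [eventually_gt_atTop (0:ℝ)] with μ hμ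
    exact (subst1 b hμ).symm
  rw [intervalIntegral.integral_const_mul] at hDCT
  exact hDCT.congr' heq

noncomputable def Efun (b : ℝ) : ℝ := ∫ y in (0:ℝ)..b, Real.exp (-Real.pi*y^2/4)

lemma Eint (u v : ℝ) :
    IntervalIntegrable (fun y => Real.exp (-Real.pi*y^2/4)) volume u v :=
  (Real.continuous_exp.comp ((continuous_const.mul (continuous_pow 2)).div_const
    _)).intervalIntegrable u v

lemma Epos {b : ℝ} (hb : 0 < b) : 0 < Efun b :=
  intervalIntegral_pos_of_pos (Eint 0 b) (fun _ => Real.exp_pos _) hb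

lemma Emono {b1 b2 : ℝ} (h12 : b1 ≤ b2) : Efun b1 ≤ Efun b2 := by
  unfold Efun
  have hsplit : (∫ y in (0:ℝ)..b2, Real.exp (-Real.pi*y^2/4))
      = (∫ y in (0:ℝ)..b1, Real.exp (-Real.pi*y^2/4))
        + ∫ y in b1..b2, Real.exp (-Real.pi*y^2/4) :=
    (integral_add_adjacent_intervals (Eint 0 b1) (Eint b1 b2)).symm
  have hnn : 0 ≤ ∫ y in b1..b2, Real.exp (-Real.pi*y^2/4) :=
    intervalIntegral.integral_nonneg h12 (fun u _ => (Real.exp_pos _).le)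
  linarith [hsplit]

/-- For `X` Rayleigh with mean `μ = √(πθ/2)`, the threshold `c*` defined by
`(1+c*)∫₀^{c*} f_X(x)/(1+x) dx = 1` satisfies `c* ∼ a*μ` as `μ → ∞`, where `a*` is the
unique positive solution of `(πa/2)∫₀^a e^{-πy²/4} dy = 1`. -/
theorem stmt17 (a : ℝ) (ha : 0 < a)
    (ha' : Real.pi * a / 2 * (∫ y in (0:ℝ)..a, Real.exp (-Real.pi * y^2 / 4)) = 1)
    (c : ℝ → ℝ)
    (hc : ∀ μ > (0:ℝ), 0 < c μ ∧
      (1 + c μ) * (∫ x in (0:ℝ)..(c μ),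
        (x / (2*μ^2/Real.pi)) * Real.exp (-x^2 / (2*(2*μ^2/Real.pi))) / (1+x)) = 1) :
    Filter.Tendsto (fun μ => c μ / (a * μ)) Filter.atTop (nhds 1) := by
  have hπ := Real.pi_pos
  have ha'' : Real.pi * a / 2 * Efun a = 1 := by
    unfold Efun
    exact ha'
  rw [Metric.tendsto_nhds]
  intro ε hε
  set δ : ℝ := min (ε/2) (1/2) with hδdef
  have hδ0 : 0 < δ := lt_min (by linarith) (by norm_num)
  have hδ1 : δ ≤ 1/2 := min_le_right _ _
  have hδε : δ ≤ ε/2 := min_le_left _ _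
  set b1 : ℝ := a*(1-δ) with hb1def
  set b2 : ℝ := a*(1+δ) with hb2def
  have hb1 : 0 < b1 := by
    apply mul_pos ha; linarith
  have hb1a : b1 < a := by nlinarith
  have hab2 : a < b2 := by nlinarith
  have hb2 : 0 < b2 := ha.trans hab2
  -- limits at b1 and b2
  have hlow : Real.pi*b1/2 * Efun b1 < 1 := by
    calc Real.pi*b1/2 * Efun b1 < Real.pi*a/2 * Efun b1 := by
          apply mul_lt_mul_of_pos_right _ (Epos hb1)
          nlinarith
      _ ≤ Real.pi*a/2 * Efun a := by
          apply mul_le_mul_of_nonneg_left (Emono hb1a.le)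
          positivity
      _ = 1 := ha''
  have hhigh : 1 < Real.pi*b2/2 * Efun b2 := by
    calc (1:ℝ) = Real.pi*a/2 * Efun a := ha''.symm
      _ < Real.pi*b2/2 * Efun a := by
          apply mul_lt_mul_of_pos_right _ (Epos ha)
          nlinarith
      _ ≤ Real.pi*b2/2 * Efun b2 := by
          apply mul_le_mul_of_nonneg_left (Emono hab2.le)
          positivity
  have ev1 : ∀ᶠ μ : ℝ in atTop, (1+b1*μ) * ∫ x in (0:ℝ)..(b1*μ), gfun μ x < 1 :=
    (key b1 hb1).eventually_lt_const hlow
  have ev2 : ∀ᶠ μ : ℝ in atTop, 1 < (1+b2*μ) * ∫ x in (0:ℝ)..(b2*μ), gfun μ x :=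
    (key b2 hb2).eventually_const_lt hhigh
  filter_upwards [ev1, ev2, eventually_gt_atTop (0:ℝ)] with μ h1 h2 hμ0
  obtain ⟨hcpos, hceq⟩ := hc μ hμ0
  have hceq' : (1 + c μ) * ∫ x in (0:ℝ)..(c μ), gfun μ x = 1 := hceq
  have hlt1 : b1*μ < c μ := by
    by_contra h
    push_neg at h
    have := mono1 μ hcpos.le h
    rw [hceq'] at this
    linarith
  have hlt2 : c μ < b2*μ := by
    by_contra h
    push_neg at h
    have := mono1 μ (by positivity : (0:ℝ) ≤ b2*μ) h
    rw [hceq'] at this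
    linarith
  have haμ : 0 < a*μ := mul_pos ha hμ0
  have hu : c μ / (a*μ) < 1 + δ := by
    rw [div_lt_iff₀ haμ]
    nlinarith
  have hl : 1 - δ < c μ / (a*μ) := by
    rw [lt_div_iff₀ haμ]
    nlinarith
  rw [Real.dist_eq, abs_lt]
  constructor <;> linarith
end

section
/- For X Poisson with mean μ and any a > 0, lim_{μ→∞} (1+aμ)·Σ_{k=⌈μ−μ^{2/3}⌉}^{⌊μ+μ^{2/3}⌋} e^{-μ}μ^k/((1+k)·k!) = a. -/
open Filter Real Finset


private lemma aux_tsum_exp (μ : ℝ) : ∑' k:ℕ, μ^k / (k.factorial : ℝ) = Real.exp μ := by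
  rw [Real.exp_eq_exp_ℝ, NormedSpace.exp_eq_tsum_div]

private lemma aux_sum1 (μ : ℝ) : Summable (fun k:ℕ => (k:ℝ) * (μ^k / k.factorial)) := by
  rw [← summable_nat_add_iff 1]
  refine ((Real.summable_pow_div_factorial μ).mul_left μ).congr fun n => ?_
  rw [Nat.factorial_succ]
  have h : ((n:ℝ)+1) ≠ 0 := by positivity
  push_cast
  field_simp
  ring

private lemma aux_tsum1 (μ : ℝ) : ∑' k:ℕ, (k:ℝ) * (μ^k / k.factorial) = μ * Real.exp μ := by
  rw [Summable.tsum_eq_zero_add (aux_sum1 μ)]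
  have h : ∀ n:ℕ, ((n+1:ℕ):ℝ) * (μ^(n+1) / (n+1).factorial) = μ * (μ^n / n.factorial) := by
    intro n
    rw [Nat.factorial_succ]
    have h : ((n:ℝ)+1) ≠ 0 := by positivity
    push_cast
    field_simp
    ring
  rw [tsum_congr h, tsum_mul_left, aux_tsum_exp]
  simp

private lemma aux_sum2 (μ : ℝ) : Summable (fun k:ℕ => (k:ℝ) * ((k:ℝ)-1) * (μ^k / k.factorial)) := by
  rw [← summable_nat_add_iff 2]
  refine ((Real.summable_pow_div_factorial μ).mul_left (μ^2)).congr fun n => ?_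
  rw [show n+2 = (n+1)+1 by ring, Nat.factorial_succ, Nat.factorial_succ]
  have h1 : ((n:ℝ)+1) ≠ 0 := by positivity
  have h2 : ((n:ℝ)+1+1) ≠ 0 := by positivity
  push_cast
  field_simp
  ring

private lemma aux_tsum2 (μ : ℝ) :
    ∑' k:ℕ, (k:ℝ) * ((k:ℝ)-1) * (μ^k / k.factorial) = μ^2 * Real.exp μ := by
  rw [Summable.tsum_eq_zero_add (aux_sum2 μ), Summable.tsum_eq_zero_add ((summable_nat_add_iff 1).2 (aux_sum2 μ))]
  have h : ∀ n:ℕ, ((n+1+1:ℕ):ℝ) * (((n+1+1:ℕ):ℝ)-1) * (μ^(n+1+1) / (n+1+1).factorial)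
      = μ^2 * (μ^n / n.factorial) := by
    intro n
    rw [show n+1+1 = (n+1)+1 from rfl, Nat.factorial_succ, Nat.factorial_succ]
    have h1 : ((n:ℝ)+1) ≠ 0 := by positivity
    have h2 : ((n:ℝ)+1+1) ≠ 0 := by positivity
    push_cast
    field_simp
    ring
  rw [tsum_congr h, tsum_mul_left, aux_tsum_exp]
  simp

private lemma aux_msum (μ : ℝ) : Summable (fun k:ℕ => ((k:ℝ)-μ)^2 * (μ^k / k.factorial)) := by
  have key : ∀ k:ℕ, (k:ℝ) * ((k:ℝ)-1) * (μ^k / k.factorial)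
      + (1-2*μ) * ((k:ℝ) * (μ^k / k.factorial)) + μ^2 * (μ^k / k.factorial)
      = ((k:ℝ)-μ)^2 * (μ^k / k.factorial) := fun k => by ring
  exact (((aux_sum2 μ).add ((aux_sum1 μ).mul_left (1-2*μ))).add
    ((Real.summable_pow_div_factorial μ).mul_left (μ^2))).congr key

private lemma aux_mtsum (μ : ℝ) :
    ∑' k:ℕ, ((k:ℝ)-μ)^2 * (μ^k / k.factorial) = μ * Real.exp μ := by
  have key : ∀ k:ℕ, ((k:ℝ)-μ)^2 * (μ^k / k.factorial)
      = (k:ℝ) * ((k:ℝ)-1) * (μ^k / k.factorial)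
      + (1-2*μ) * ((k:ℝ) * (μ^k / k.factorial)) + μ^2 * (μ^k / k.factorial) := fun k => by ring
  rw [tsum_congr key,
    Summable.tsum_add ((aux_sum2 μ).add ((aux_sum1 μ).mul_left (1-2*μ)))
      ((Real.summable_pow_div_factorial μ).mul_left (μ^2)),
    Summable.tsum_add (aux_sum2 μ) ((aux_sum1 μ).mul_left (1-2*μ)),
    tsum_mul_left, tsum_mul_left, aux_tsum2, aux_tsum1, aux_tsum_exp]
  ring

private lemma aux_tail (μ : ℝ) (hμ : 1 ≤ μ) :
    (1 - μ ^ (-(1:ℝ)/3)) * Real.exp μ ≤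
      ∑ k ∈ Finset.Icc ⌈μ - μ ^ ((2:ℝ)/3)⌉₊ ⌊μ + μ ^ ((2:ℝ)/3)⌋₊, μ^k / (k.factorial:ℝ) := by
  have hμ0 : (0:ℝ) < μ := lt_of_lt_of_le one_pos hμ
  set s : Finset ℕ := Finset.Icc ⌈μ - μ ^ ((2:ℝ)/3)⌉₊ ⌊μ + μ ^ ((2:ℝ)/3)⌋₊ with hs
  have hg : Summable (fun k:ℕ => μ^k / (k.factorial:ℝ)) := Real.summable_pow_div_factorial μ
  have hkey := Summable.sum_add_tsum_compl (s := s) hg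
  rw [aux_tsum_exp] at hkey
  have hC : ∑' (k : ↑((s:Set ℕ)ᶜ)), μ^(k:ℕ) / ((k:ℕ).factorial:ℝ)
      ≤ μ ^ (-(1:ℝ)/3) * Real.exp μ := by
    have hF := aux_msum μ
    have h1 : ∑' (k : ↑((s:Set ℕ)ᶜ)), μ^(k:ℕ) / ((k:ℕ).factorial:ℝ)
        ≤ ∑' (k : ↑((s:Set ℕ)ᶜ)), μ ^ (-(4:ℝ)/3) * ((((k:ℕ):ℝ)-μ)^2 * (μ^(k:ℕ) / ((k:ℕ).factorial:ℝ))) := by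
      refine Summable.tsum_le_tsum (fun k => ?_) (hg.subtype _) ((hF.mul_left _).subtype _)
      obtain ⟨k, hk⟩ := k
      simp only [Set.mem_compl_iff, Finset.coe_Icc, Set.mem_Icc, hs, Finset.mem_coe,
        Finset.mem_Icc, not_and_or, not_le] at hk
      have hgk : (0:ℝ) ≤ μ^k / (k.factorial:ℝ) := by positivity
      have hsq : μ ^ ((4:ℝ)/3) ≤ ((k:ℝ)-μ)^2 := by
        have h43 : μ ^ ((4:ℝ)/3) = μ ^ ((2:ℝ)/3) * μ ^ ((2:ℝ)/3) := by
          rw [← Real.rpow_add hμ0]; norm_num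
        have h23 : (0:ℝ) ≤ μ ^ ((2:ℝ)/3) := (Real.rpow_pos_of_pos hμ0 _).le
        rcases hk with hk | hk
        · have hlt : (k:ℝ) < μ - μ ^ ((2:ℝ)/3) := Nat.lt_ceil.mp hk
          nlinarith
        · have hlt : μ + μ ^ ((2:ℝ)/3) < (k:ℝ) := (Nat.floor_lt (by positivity)).mp hk
          nlinarith
      have h14 : μ ^ (-(4:ℝ)/3) * μ ^ ((4:ℝ)/3) = 1 := by
        rw [← Real.rpow_add hμ0]; norm_num
      have ht : (0:ℝ) ≤ μ ^ (-(4:ℝ)/3) := (Real.rpow_pos_of_pos hμ0 _).le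
      calc μ^k / (k.factorial:ℝ) = (μ ^ (-(4:ℝ)/3) * μ ^ ((4:ℝ)/3)) * (μ^k / (k.factorial:ℝ)) := by
            rw [h14, one_mul]
        _ ≤ μ ^ (-(4:ℝ)/3) * (((k:ℝ)-μ)^2 * (μ^k / (k.factorial:ℝ))) := by
            rw [mul_assoc]
            exact mul_le_mul_of_nonneg_left (mul_le_mul_of_nonneg_right hsq hgk) ht
    rw [tsum_mul_left] at h1
    have h3 : ∑' (k : ↑((s:Set ℕ)ᶜ)), ((((k:ℕ):ℝ)-μ)^2 * (μ^(k:ℕ) / ((k:ℕ).factorial:ℝ)))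
        ≤ μ * Real.exp μ := by
      have hkey2 := Summable.sum_add_tsum_compl (s := s) hF
      rw [aux_mtsum] at hkey2
      have hnn : (0:ℝ) ≤ ∑ k ∈ s, ((k:ℝ)-μ)^2 * (μ^k / (k.factorial:ℝ)) :=
        Finset.sum_nonneg fun k _ => by positivity
      linarith
    have h4 : (0:ℝ) ≤ μ ^ (-(4:ℝ)/3) := (Real.rpow_pos_of_pos hμ0 _).le
    have h5 : μ ^ (-(4:ℝ)/3) * (μ * Real.exp μ) = μ ^ (-(1:ℝ)/3) * Real.exp μ := by
      rw [← mul_assoc, mul_comm (μ ^ (-(4:ℝ)/3)) μ]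
      nth_rewrite 1 [← Real.rpow_one μ]
      rw [← Real.rpow_add hμ0]
      norm_num
    calc _ ≤ μ ^ (-(4:ℝ)/3) * ∑' (k : ↑((s:Set ℕ)ᶜ)), ((((k:ℕ):ℝ)-μ)^2 * (μ^(k:ℕ) / ((k:ℕ).factorial:ℝ))) := h1
      _ ≤ μ ^ (-(4:ℝ)/3) * (μ * Real.exp μ) := mul_le_mul_of_nonneg_left h3 h4
      _ = _ := h5
  nlinarith [Real.exp_pos μ]

/-- For Poisson `X` with mean `μ` and any `a > 0`,
`lim_{μ→∞} (1+aμ)·Σ_{k=⌈μ−μ^{2/3}⌉}^{⌊μ+μ^{2/3}⌋} e^{-μ}μ^k/((1+k)k!) = a`. -/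
theorem stmt18 (a : ℝ) (ha : 0 < a) :
    Filter.Tendsto (fun μ : ℝ => (1 + a*μ) *
      ∑ k ∈ Finset.Icc ⌈μ - μ ^ ((2:ℝ)/3)⌉₊ ⌊μ + μ ^ ((2:ℝ)/3)⌋₊,
        Real.exp (-μ) * μ^k / ((1+(k:ℝ)) * (Nat.factorial k)))
      Filter.atTop (nhds a) := by
  -- limits of the bounding functions
  have hinv : Tendsto (fun μ:ℝ => 1/μ) atTop (nhds 0) := by
    simpa [one_div] using tendsto_inv_atTop_zero
  have hr : Tendsto (fun μ:ℝ => μ ^ (-(1:ℝ)/3)) atTop (nhds 0) := by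
    have := tendsto_rpow_neg_atTop (by norm_num : (0:ℝ) < 1/3)
    simpa [neg_div] using this
  -- basic eventual facts
  have hbasic : ∀ μ:ℝ, 1 ≤ μ → 0 < μ ∧ μ ^ (-(1:ℝ)/3) ≤ 1 ∧ 0 < μ ^ (-(1:ℝ)/3)
      ∧ μ ^ ((2:ℝ)/3) = μ * μ ^ (-(1:ℝ)/3) ∧ 0 < μ ^ ((2:ℝ)/3) := by
    intro μ hμ
    have hμ0 : (0:ℝ) < μ := lt_of_lt_of_le one_pos hμ
    refine ⟨hμ0, Real.rpow_le_one_of_one_le_of_nonpos hμ (by norm_num), Real.rpow_pos_of_pos hμ0 _, ?_, Real.rpow_pos_of_pos hμ0 _⟩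
    nth_rewrite 2 [← Real.rpow_one μ]
    rw [← Real.rpow_add hμ0]
    norm_num
  -- upper bound function tends to a
  have hU : Tendsto (fun μ:ℝ => (1 + a*μ) / (1 + μ - μ ^ ((2:ℝ)/3))) atTop (nhds a) := by
    have hV : Tendsto (fun μ:ℝ => (1/μ + a) / (1/μ + 1 - μ ^ (-(1:ℝ)/3))) atTop (nhds a) := by
      have h := (hinv.add (tendsto_const_nhds (x := a))).div
        (((hinv.add (tendsto_const_nhds (x := (1:ℝ)))).sub hr))
        (by norm_num : (0:ℝ) + 1 - 0 ≠ 0)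
      rw [show ((0:ℝ) + a) / (0 + 1 - 0) = a by simp] at h
      exact h
    refine hV.congr' ?_
    filter_upwards [eventually_ge_atTop (1:ℝ)] with μ hμ
    obtain ⟨hμ0, ht1, ht0, h23, -⟩ := hbasic μ hμ
    have hd1 : (0:ℝ) < 1/μ + 1 - μ ^ (-(1:ℝ)/3) := by
      have : (0:ℝ) < 1/μ := by positivity
      linarith
    have hd2 : (0:ℝ) < 1 + μ - μ * μ ^ (-(1:ℝ)/3) := by nlinarith
    rw [h23, div_eq_div_iff hd1.ne' hd2.ne']
    field_simp
  -- lower bound function tends to a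
  have hL : Tendsto (fun μ:ℝ => (1 + a*μ) * ((1 - μ ^ (-(1:ℝ)/3)) / (1 + μ + μ ^ ((2:ℝ)/3))))
      atTop (nhds a) := by
    have hV : Tendsto (fun μ:ℝ => (1/μ + a) * (1 - μ ^ (-(1:ℝ)/3)) / (1/μ + 1 + μ ^ (-(1:ℝ)/3)))
        atTop (nhds a) := by
      have h := (((hinv.add (tendsto_const_nhds (x := a))).mul
        ((tendsto_const_nhds (x := (1:ℝ))).sub hr)).div
        ((hinv.add (tendsto_const_nhds (x := (1:ℝ)))).add hr))
        (by norm_num : (0:ℝ) + 1 + 0 ≠ 0)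
      rw [show ((0:ℝ) + a) * (1 - 0) / (0 + 1 + 0) = a by simp] at h
      exact h
    refine hV.congr' ?_
    filter_upwards [eventually_ge_atTop (1:ℝ)] with μ hμ
    obtain ⟨hμ0, ht1, ht0, h23, h23p⟩ := hbasic μ hμ
    have hd1 : (0:ℝ) < 1/μ + 1 + μ ^ (-(1:ℝ)/3) := by
      have : (0:ℝ) < 1/μ := by positivity
      linarith
    have hd2 : (0:ℝ) < 1 + μ + μ * μ ^ (-(1:ℝ)/3) := by nlinarith
    rw [h23, mul_div_assoc', div_eq_div_iff hd1.ne' hd2.ne']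
    field_simp
  refine tendsto_of_tendsto_of_tendsto_of_le_of_le' hL hU ?_ ?_
  · -- lower bound
    filter_upwards [eventually_ge_atTop (1:ℝ)] with μ hμ
    obtain ⟨hμ0, ht1, ht0, h23, h23p⟩ := hbasic μ hμ
    set s : Finset ℕ := Finset.Icc ⌈μ - μ ^ ((2:ℝ)/3)⌉₊ ⌊μ + μ ^ ((2:ℝ)/3)⌋₊ with hs
    have ha0 : (0:ℝ) ≤ 1 + a*μ := by nlinarith
    have hD2 : (0:ℝ) < 1 + μ + μ ^ ((2:ℝ)/3) := by linarith
    have hstep : ∀ k ∈ s, Real.exp (-μ) / (1 + μ + μ ^ ((2:ℝ)/3)) * (μ^k / (k.factorial:ℝ))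
        ≤ Real.exp (-μ) * μ^k / ((1+(k:ℝ)) * (Nat.factorial k)) := by
      intro k hk
      have hkhi : (k:ℝ) ≤ μ + μ ^ ((2:ℝ)/3) := by
        have h1 : (k:ℝ) ≤ (⌊μ + μ ^ ((2:ℝ)/3)⌋₊ : ℝ) :=
          Nat.cast_le.2 (Finset.mem_Icc.1 hk).2
        have h2 : ((⌊μ + μ ^ ((2:ℝ)/3)⌋₊:ℕ) : ℝ) ≤ μ + μ ^ ((2:ℝ)/3) :=
          Nat.floor_le (by positivity)
        linarith
      have hfac : (0:ℝ) < (k.factorial:ℝ) := by positivity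
      rw [div_mul_div_comm]
      apply div_le_div_of_nonneg_left (by positivity)
        (by positivity : (0:ℝ) < (1+(k:ℝ)) * (k.factorial:ℝ))
      exact mul_le_mul_of_nonneg_right (by linarith) hfac.le
    have hsum : Real.exp (-μ) / (1 + μ + μ ^ ((2:ℝ)/3)) * ∑ k ∈ s, μ^k / (k.factorial:ℝ)
        ≤ ∑ k ∈ s, Real.exp (-μ) * μ^k / ((1+(k:ℝ)) * (Nat.factorial k)) := by
      rw [Finset.mul_sum]
      exact Finset.sum_le_sum hstep
    have htail := aux_tail μ hμ
    have hpos : (0:ℝ) ≤ Real.exp (-μ) / (1 + μ + μ ^ ((2:ℝ)/3)) := by positivity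
    have h2 : Real.exp (-μ) / (1 + μ + μ ^ ((2:ℝ)/3)) * ((1 - μ ^ (-(1:ℝ)/3)) * Real.exp μ)
        ≤ Real.exp (-μ) / (1 + μ + μ ^ ((2:ℝ)/3)) * ∑ k ∈ s, μ^k / (k.factorial:ℝ) :=
      mul_le_mul_of_nonneg_left htail hpos
    have heq : Real.exp (-μ) / (1 + μ + μ ^ ((2:ℝ)/3)) * ((1 - μ ^ (-(1:ℝ)/3)) * Real.exp μ)
        = (1 - μ ^ (-(1:ℝ)/3)) / (1 + μ + μ ^ ((2:ℝ)/3)) := by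
      rw [Real.exp_neg]
      have he : Real.exp μ ≠ 0 := (Real.exp_pos μ).ne'
      field_simp
    have := le_trans (le_of_eq heq.symm) (le_trans h2 hsum)
    calc (1 + a*μ) * ((1 - μ ^ (-(1:ℝ)/3)) / (1 + μ + μ ^ ((2:ℝ)/3)))
        ≤ (1 + a*μ) * ∑ k ∈ s, Real.exp (-μ) * μ^k / ((1+(k:ℝ)) * (Nat.factorial k)) :=
          mul_le_mul_of_nonneg_left this ha0
      _ = _ := rfl
  · -- upper bound
    filter_upwards [eventually_ge_atTop (1:ℝ)] with μ hμ
    obtain ⟨hμ0, ht1, ht0, h23, h23p⟩ := hbasic μ hμ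
    set s : Finset ℕ := Finset.Icc ⌈μ - μ ^ ((2:ℝ)/3)⌉₊ ⌊μ + μ ^ ((2:ℝ)/3)⌋₊ with hs
    have ha0 : (0:ℝ) ≤ 1 + a*μ := by nlinarith
    have hD : (0:ℝ) < 1 + μ - μ ^ ((2:ℝ)/3) := by rw [h23]; nlinarith
    have hstep : ∀ k ∈ s, Real.exp (-μ) * μ^k / ((1+(k:ℝ)) * (Nat.factorial k))
        ≤ Real.exp (-μ) / (1 + μ - μ ^ ((2:ℝ)/3)) * (μ^k / (k.factorial:ℝ)) := by
      intro k hk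
      have hklo : μ - μ ^ ((2:ℝ)/3) ≤ (k:ℝ) := by
        have h1 : ((⌈μ - μ ^ ((2:ℝ)/3)⌉₊:ℕ) : ℝ) ≤ (k:ℝ) :=
          Nat.cast_le.2 (Finset.mem_Icc.1 hk).1
        have h2 : μ - μ ^ ((2:ℝ)/3) ≤ ((⌈μ - μ ^ ((2:ℝ)/3)⌉₊:ℕ) : ℝ) := Nat.le_ceil _
        linarith
      have hfac : (0:ℝ) < (k.factorial:ℝ) := by positivity
      rw [div_mul_div_comm]
      apply div_le_div_of_nonneg_left (by positivity)
        (by positivity : (0:ℝ) < (1 + μ - μ ^ ((2:ℝ)/3)) * (k.factorial:ℝ))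
      exact mul_le_mul_of_nonneg_right (by linarith) hfac.le
    have hsum : ∑ k ∈ s, Real.exp (-μ) * μ^k / ((1+(k:ℝ)) * (Nat.factorial k))
        ≤ Real.exp (-μ) / (1 + μ - μ ^ ((2:ℝ)/3)) * ∑ k ∈ s, μ^k / (k.factorial:ℝ) := by
      rw [Finset.mul_sum]
      exact Finset.sum_le_sum hstep
    have hSle : ∑ k ∈ s, μ^k / (k.factorial:ℝ) ≤ Real.exp μ := by
      have hg : Summable (fun k:ℕ => μ^k / (k.factorial:ℝ)) := Real.summable_pow_div_factorial μ
      have hkey := Summable.sum_add_tsum_compl (s := s) hg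
      rw [aux_tsum_exp] at hkey
      have hnn : (0:ℝ) ≤ ∑' (k : ↑((s:Set ℕ)ᶜ)), μ^(k:ℕ) / ((k:ℕ).factorial:ℝ) :=
        tsum_nonneg fun k => by positivity
      linarith
    have hpos : (0:ℝ) ≤ Real.exp (-μ) / (1 + μ - μ ^ ((2:ℝ)/3)) := by positivity
    have h2 : Real.exp (-μ) / (1 + μ - μ ^ ((2:ℝ)/3)) * ∑ k ∈ s, μ^k / (k.factorial:ℝ)
        ≤ Real.exp (-μ) / (1 + μ - μ ^ ((2:ℝ)/3)) * Real.exp μ :=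
      mul_le_mul_of_nonneg_left hSle hpos
    have heq : Real.exp (-μ) / (1 + μ - μ ^ ((2:ℝ)/3)) * Real.exp μ
        = 1 / (1 + μ - μ ^ ((2:ℝ)/3)) := by
      rw [Real.exp_neg]
      have he : Real.exp μ ≠ 0 := (Real.exp_pos μ).ne'
      field_simp
    have hfinal := le_trans hsum (le_trans h2 (le_of_eq heq))
    calc (1 + a*μ) * ∑ k ∈ s, Real.exp (-μ) * μ^k / ((1+(k:ℝ)) * (Nat.factorial k))
        ≤ (1 + a*μ) * (1 / (1 + μ - μ ^ ((2:ℝ)/3))) := mul_le_mul_of_nonneg_left hfinal ha0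
      _ = (1 + a*μ) / (1 + μ - μ ^ ((2:ℝ)/3)) := by rw [mul_one_div]
end

section
/- For X Poisson with mean μ, lim_{μ→∞} μ·Σ_{k=0}^{⌈μ−μ^{2/3}⌉−1} e^{-μ}μ^k/((1+k)·k!) = 0. -/
open Filter Finset Real

lemma aux_exp_neg_le {t : ℝ} (h0 : 0 ≤ t) (h1 : t ≤ 1) :
    Real.exp (-t) ≤ 1 - t + t^2/2 + t^3 := by
  have habs : |(-t)| ≤ 1 := by rw [abs_neg, abs_of_nonneg h0]; exact h1
  have h := Real.exp_bound habs (n := 3) (by norm_num)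
  have hsum : ∑ m ∈ Finset.range 3, (-t) ^ m / (Nat.factorial m) = 1 - t + t^2/2 := by
    simp [Finset.sum_range_succ, Nat.factorial]
    ring
  rw [hsum, abs_neg, abs_of_nonneg h0] at h
  have := (abs_sub_le_iff.1 h).1
  have h9 : t ^ 3 * ((3:ℕ).succ / ((Nat.factorial 3) * 3)) ≤ t^3 := by
    norm_num [Nat.factorial]
    nlinarith [pow_nonneg h0 3]
  linarith

lemma aux_key {μ : ℝ} (hμ : 1 ≤ μ) :
    μ * ∑ k ∈ Finset.range ⌈μ - μ ^ ((2:ℝ)/3)⌉₊,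
        Real.exp (-μ) * μ^k / ((1+(k:ℝ)) * (Nat.factorial k)) ≤
      Real.exp 1 * (μ * Real.exp (-(μ ^ ((1:ℝ)/3)) / 2)) := by
  have hμ0 : (0:ℝ) < μ := lt_of_lt_of_le one_pos hμ
  set r : ℝ := μ ^ ((1:ℝ)/3) with hr
  have hr1 : 1 ≤ r := Real.one_le_rpow hμ (by norm_num)
  have hr0 : 0 < r := lt_of_lt_of_le one_pos hr1
  have hr3 : r ^ 3 = μ := by
    rw [hr, ← Real.rpow_natCast (μ ^ ((1:ℝ)/3)) 3, ← Real.rpow_mul hμ0.le]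
    norm_num
  have hr2 : μ ^ ((2:ℝ)/3) = r ^ 2 := by
    rw [hr, ← Real.rpow_natCast (μ ^ ((1:ℝ)/3)) 2, ← Real.rpow_mul hμ0.le]
    norm_num
  set t : ℝ := 1 / r with htdef
  have ht0 : 0 < t := by positivity
  have ht1 : t ≤ 1 := by rw [htdef]; exact div_le_one_of_le₀ hr1 hr0.le
  set m : ℝ := μ - r ^ 2 with hmdef
  have hm0 : 0 ≤ m := by rw [hmdef, ← hr3]; nlinarith
  set N : ℕ := ⌈μ - μ ^ ((2:ℝ)/3)⌉₊ with hN
  have hNm : (N : ℝ) < m + 1 := by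
    rw [hN, hmdef, hr2] at *
    exact Nat.ceil_lt_add_one (by rw [← hr2]; rw [hr2]; exact hm0)
  -- step 1: termwise bound
  have step1 : ∑ k ∈ Finset.range N, Real.exp (-μ) * μ^k / ((1+(k:ℝ)) * (Nat.factorial k))
      ≤ ∑ k ∈ Finset.range N, Real.exp (t*m) * Real.exp (-μ) * ((μ * Real.exp (-t))^k / (Nat.factorial k)) := by
    apply Finset.sum_le_sum
    intro k hk
    have hk' : (k:ℝ) ≤ m := by
      have : k + 1 ≤ N := Finset.mem_range.1 hk
      have : ((k:ℝ) + 1) ≤ (N:ℝ) := by exact_mod_cast this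
      linarith
    have hfac : (0:ℝ) < (Nat.factorial k : ℝ) := by positivity
    have e1 : Real.exp (-μ) * μ^k / ((1+(k:ℝ)) * (Nat.factorial k))
        ≤ Real.exp (-μ) * μ^k / (Nat.factorial k) := by
      apply div_le_div_of_nonneg_left (by positivity) hfac
      nlinarith [Nat.cast_nonneg (α := ℝ) k]
    have e2 : Real.exp (-μ) * μ^k / (Nat.factorial k)
        ≤ Real.exp (t*(m-k)) * (Real.exp (-μ) * μ^k / (Nat.factorial k)) := by
      nth_rewrite 1 [← one_mul (Real.exp (-μ) * μ^k / (Nat.factorial k))]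
      apply mul_le_mul_of_nonneg_right _ (by positivity)
      rw [← Real.exp_zero]
      apply Real.exp_le_exp.2
      have : 0 ≤ m - k := by linarith
      positivity
    have e3 : Real.exp (t*(m-k)) * (Real.exp (-μ) * μ^k / (Nat.factorial k))
        = Real.exp (t*m) * Real.exp (-μ) * ((μ * Real.exp (-t))^k / (Nat.factorial k)) := by
      rw [mul_pow, ← Real.exp_nat_mul]
      rw [show t*(m-k) = t*m + k*(-t) by ring, Real.exp_add]
      ring
    calc _ ≤ _ := e1
      _ ≤ _ := e2
      _ = _ := e3
  -- step 2: sum of exp series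
  have step2 : ∑ k ∈ Finset.range N, ((μ * Real.exp (-t))^k / (Nat.factorial k : ℝ))
      ≤ Real.exp (μ * Real.exp (-t)) :=
    Real.sum_le_exp_of_nonneg (by positivity) N
  have step3 : ∑ k ∈ Finset.range N, Real.exp (t*m) * Real.exp (-μ) * ((μ * Real.exp (-t))^k / (Nat.factorial k))
      ≤ Real.exp (t*m - μ + μ * Real.exp (-t)) := by
    rw [← Finset.mul_sum]
    calc Real.exp (t*m) * Real.exp (-μ) * ∑ k ∈ Finset.range N, ((μ * Real.exp (-t))^k / (Nat.factorial k : ℝ))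
        ≤ Real.exp (t*m) * Real.exp (-μ) * Real.exp (μ * Real.exp (-t)) := by
          apply mul_le_mul_of_nonneg_left step2 (by positivity)
      _ = Real.exp (t*m - μ + μ * Real.exp (-t)) := by
          rw [← Real.exp_add, ← Real.exp_add]; ring_nf
  -- step 4: exponent bound
  have expbound : t*m - μ + μ * Real.exp (-t) ≤ 1 - r/2 := by
    have h1 : Real.exp (-t) ≤ 1 - t + t^2/2 + t^3 := aux_exp_neg_le ht0.le ht1
    have h2 : μ * Real.exp (-t) ≤ μ * (1 - t + t^2/2 + t^3) :=
      mul_le_mul_of_nonneg_left h1 hμ0.le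
    have hrt : r * t = 1 := by rw [htdef]; field_simp
    have key : t*m - μ + μ * (1 - t + t^2/2 + t^3) = 1 - r/2 := by
      rw [hmdef, ← hr3]
      have : t = 1/r := htdef
      field_simp [this]
      linear_combination (r*(r*t-1) + 2*((r*t)^2 + r*t + 1)) * hrt
    linarith
  -- combine
  calc μ * ∑ k ∈ Finset.range N, Real.exp (-μ) * μ^k / ((1+(k:ℝ)) * (Nat.factorial k))
      ≤ μ * Real.exp (t*m - μ + μ * Real.exp (-t)) := by
        apply mul_le_mul_of_nonneg_left (step1.trans step3) hμ0.le
    _ ≤ μ * Real.exp (1 - r/2) := by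
        apply mul_le_mul_of_nonneg_left (Real.exp_le_exp.2 expbound) hμ0.le
    _ = Real.exp 1 * (μ * Real.exp (-r/2)) := by
        rw [show (1:ℝ) - r/2 = 1 + (-r/2) by ring, Real.exp_add]; ring

/-- For Poisson `X` with mean `μ`,
`lim_{μ→∞} μ·Σ_{k=0}^{⌈μ−μ^{2/3}⌉−1} e^{-μ}μ^k/((1+k)k!) = 0`. -/
theorem stmt19 :
    Filter.Tendsto (fun μ : ℝ => μ *
      ∑ k ∈ Finset.range ⌈μ - μ ^ ((2:ℝ)/3)⌉₊,
        Real.exp (-μ) * μ^k / ((1+(k:ℝ)) * (Nat.factorial k)))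
      Filter.atTop (nhds 0) := by
  have hg : Filter.Tendsto (fun μ : ℝ => Real.exp 1 * (μ * Real.exp (-(μ ^ ((1:ℝ)/3)) / 2)))
      Filter.atTop (nhds 0) := by
    have h1 : Filter.Tendsto (fun x : ℝ => x ^ (3:ℕ) * Real.exp (-x)) Filter.atTop (nhds 0) :=
      Real.tendsto_pow_mul_exp_neg_atTop_nhds_zero 3
    have h2 : Filter.Tendsto (fun μ : ℝ => μ ^ ((1:ℝ)/3) / 2) Filter.atTop Filter.atTop :=
      (tendsto_rpow_atTop (by norm_num)).atTop_div_const two_pos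
    have h3 := h1.comp h2
    have h4 : Filter.Tendsto (fun μ : ℝ => Real.exp 1 * (8 * ((μ ^ ((1:ℝ)/3) / 2) ^ (3:ℕ) * Real.exp (-(μ ^ ((1:ℝ)/3) / 2)))))
        Filter.atTop (nhds (Real.exp 1 * (8 * 0))) :=
      (h3.const_mul 8).const_mul (Real.exp 1)
    rw [mul_zero, mul_zero] at h4
    apply h4.congr'
    filter_upwards [Filter.eventually_ge_atTop (0:ℝ)] with μ hμ
    have hcube : (μ ^ ((1:ℝ)/3)) ^ (3:ℕ) = μ := by
      rw [← Real.rpow_natCast (μ ^ ((1:ℝ)/3)) 3, ← Real.rpow_mul hμ]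
      norm_num
    rw [div_pow, hcube]
    rw [show -(μ ^ ((1:ℝ)/3) / 2) = -(μ ^ ((1:ℝ)/3)) / 2 by ring]
    ring
  apply squeeze_zero' _ _ hg
  · filter_upwards [Filter.eventually_ge_atTop (0:ℝ)] with μ hμ
    apply mul_nonneg hμ
    apply Finset.sum_nonneg
    intro k _
    have : (0:ℝ) ≤ 1 + (k:ℝ) := by positivity
    positivity
  · filter_upwards [Filter.eventually_ge_atTop (1:ℝ)] with μ hμ
    exact aux_key hμ
end
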